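/- For every even n and every integer s with 0 < s < n/2, the chromatic number of the generalized Johnson graph J(n, n/2, s) is at most 2·C(2s+1, s+1), where C denotes the binomial coefficient. -/

import Mathlib

/-- The generalized Johnson graph `J(n,k,s)`: vertices are the `k`-element
subsets of `{1,…,n}`, two vertices adjacent iff their intersection has size exactly `s`. -/
def johnsonGraph (n k s : ℕ) : SimpleGraph {v : Finset (Fin n) // v.card = k} where
  Adj v w := v ≠ w ∧ ((v : Finset (Fin n)) ∩ (w : Finset (Fin n))).card = s
  symm := ⟨fun v w ⟨hne, h⟩ => ⟨hne.symm, by rwa [Finset.inter_comm]⟩⟩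
  loopless := ⟨fun v h => h.1 rfl⟩

/-- For every even `n` and every `0 < s < n/2`, the chromatic number of
`J(n, n/2, s)` is at most `2 * C(2s+1, s+1)`. -/
theorem johnson_chromatic_upper (n s : ℕ) (hn : Even n) (hs : 0 < s) (hsn : s < n / 2) :
    (johnsonGraph n (n / 2) s).chromaticNumber ≤ ((2 * Nat.choose (2 * s + 1) (s + 1) : ℕ) : ℕ∞) := by
  classical
  obtain ⟨m, rfl⟩ := hn
  have hm : (m + m) / 2 = m := by omega
  have hsm : s + 1 ≤ m := by omega
  have hTn : 2 * s + 1 ≤ (Finset.univ : Finset (Fin (m + m))).card := by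
    simp only [Finset.card_univ, Fintype.card_fin]; omega
  obtain ⟨T, -, hT⟩ := Finset.exists_subset_card_eq hTn
  -- For each vertex, choose a color
  set V := {v : Finset (Fin (m + m)) // v.card = (m + m) / 2}
  have key : ∀ v : V, ∃ X : Finset (Fin (m + m)), X ∈ T.powersetCard (s + 1) ∧
      (s + 1 ≤ ((v : Finset (Fin (m + m))) ∩ T).card → X ⊆ (v : Finset (Fin (m + m))) ∩ T) ∧
      (¬ s + 1 ≤ ((v : Finset (Fin (m + m))) ∩ T).card → X ⊆ T \ (v : Finset (Fin (m + m)))) := by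
    intro v
    by_cases h : s + 1 ≤ ((v : Finset (Fin (m + m))) ∩ T).card
    · obtain ⟨X, hX1, hX2⟩ := Finset.exists_subset_card_eq h
      exact ⟨X, Finset.mem_powersetCard.2 ⟨hX1.trans (Finset.inter_subset_right), hX2⟩,
        fun _ => hX1, fun h' => absurd h h'⟩
    · have h2 : s + 1 ≤ (T \ (v : Finset (Fin (m + m)))).card := by
        have := Finset.card_sdiff_add_card_inter T (v : Finset (Fin (m + m)))
        rw [Finset.inter_comm] at this
        omega
      obtain ⟨X, hX1, hX2⟩ := Finset.exists_subset_card_eq h2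
      exact ⟨X, Finset.mem_powersetCard.2 ⟨hX1.trans (Finset.sdiff_subset), hX2⟩,
        fun h' => absurd h' h, fun _ => hX1⟩
  choose X hXmem hXin hXout using key
  have hXcard : ∀ v : V, (X v).card = s + 1 := fun v => (Finset.mem_powersetCard.1 (hXmem v)).2
  set f : V → Bool × {Y // Y ∈ T.powersetCard (s + 1)} :=
    fun v => (decide (s + 1 ≤ ((v : Finset (Fin (m + m))) ∩ T).card), ⟨X v, hXmem v⟩) with hf
  have valid : ∀ {v w : V}, (johnsonGraph (m + m) ((m + m) / 2) s).Adj v w → f v ≠ f w := by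
    intro v w hadj heq
    obtain ⟨hne, hcap⟩ : v ≠ w ∧ ((v : Finset (Fin (m + m))) ∩ (w : Finset (Fin (m + m)))).card = s := hadj
    have hb : decide (s + 1 ≤ ((v : Finset (Fin (m + m))) ∩ T).card)
        = decide (s + 1 ≤ ((w : Finset (Fin (m + m))) ∩ T).card) := congrArg Prod.fst heq
    have hX : X v = X w := congrArg (fun p => (p.2 : Finset (Fin (m + m)))) heq
    by_cases h : s + 1 ≤ ((v : Finset (Fin (m + m))) ∩ T).card
    · have h' : s + 1 ≤ ((w : Finset (Fin (m + m))) ∩ T).card := by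
        by_contra h'
        simp [h, h'] at hb
      have h1 : X v ⊆ (v : Finset (Fin (m + m))) ∩ (w : Finset (Fin (m + m))) := by
        intro x hx
        have := hXin v h hx
        have := hXin w h' (hX ▸ hx)
        simp only [Finset.mem_inter] at *
        tauto
      have := Finset.card_le_card h1
      rw [hXcard, hcap] at this
      omega
    · have h' : ¬ s + 1 ≤ ((w : Finset (Fin (m + m))) ∩ T).card := by
        by_contra h'
        simp [h, h'] at hb
      have h1 : X v ⊆ Finset.univ \ ((v : Finset (Fin (m + m))) ∪ (w : Finset (Fin (m + m)))) := by
        intro x hx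
        have h2 := hXout v h hx
        have h3 := hXout w h' (hX ▸ hx)
        simp only [Finset.mem_sdiff, Finset.mem_union, Finset.mem_univ, true_and] at *
        tauto
      have hcu : ((v : Finset (Fin (m + m))) ∪ (w : Finset (Fin (m + m)))).card
          + ((v : Finset (Fin (m + m))) ∩ (w : Finset (Fin (m + m)))).card
          = (v : Finset (Fin (m + m))).card + (w : Finset (Fin (m + m))).card :=
        Finset.card_union_add_card_inter _ _
      have hv := v.2; have hw := w.2
      have hsd : (Finset.univ \ ((v : Finset (Fin (m + m))) ∪ (w : Finset (Fin (m + m))))).card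
          = (m + m) - ((v : Finset (Fin (m + m))) ∪ (w : Finset (Fin (m + m)))).card := by
        rw [Finset.card_sdiff_of_subset (Finset.subset_univ _), Finset.card_univ, Fintype.card_fin]
      have := Finset.card_le_card h1
      rw [hXcard, hsd] at this
      omega
  have col : (johnsonGraph (m + m) ((m + m) / 2) s).Coloring
      (Bool × {Y // Y ∈ T.powersetCard (s + 1)}) := SimpleGraph.Coloring.mk f valid
  have hcardC : Fintype.card (Bool × {Y // Y ∈ T.powersetCard (s + 1)})
      = 2 * Nat.choose (2 * s + 1) (s + 1) := by
    rw [Fintype.card_prod, Fintype.card_bool, Fintype.card_coe, Finset.card_powersetCard, hT]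
  refine col.colorable.chromaticNumber_le.trans_eq ?_
  norm_cast
  convert hcardC using 2
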